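/- arXiv:1412.3391 — 2 statements merged into one kernel-verified Lean document; each statement's English description precedes it below -/
import Mathlib

section
/- Let 0 < α < 1/2 and j ≥ 2. Suppose b_j = √2 b_{j-1} where b_n := (a_n − a_{n-1}) 2^n > 0, and b_n ≤ √2 b_{n-1} for all n > j. Then D_j := ((ℒ^α a)_j − (ℒ^α a)_{j-1}) − (1/√2)((ℒ^α a)_{j-1} − (ℒ^α a)_{j-2}) > 0. -/
/-- The discrete dissipation operator `(ℒ^α a)_k`. -/
noncomputable def Ldiss (α : ℝ) (a : ℕ → ℝ) (k : ℕ) : ℝ :=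
  (∑ n ∈ Finset.range k, (a k - a n) * (2:ℝ) ^ (2 * α * (n:ℝ))) +
  ∑' n : ℕ, (a k - a (k + 1 + n)) * (2:ℝ) ^ (2 * α * (k:ℝ)) * (2:ℝ) ^ (-(1:ℝ) - (n:ℝ))

lemma exp_eq (n : ℕ) : (2:ℝ) ^ (-(1:ℝ) - (n:ℝ)) = (1/2:ℝ)^(n+1) := by
  have h : (-(1:ℝ) - (n:ℝ)) = -((n+1 : ℕ):ℝ) := by push_cast; ring
  rw [h, Real.rpow_neg (by norm_num), Real.rpow_natCast, one_div, inv_pow]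

lemma summable_aux (c : ℕ → ℝ) (C : ℝ) (hC : ∀ n, |c n| ≤ C) :
    Summable (fun n => c n * (1/2:ℝ)^(n+1)) := by
  have hsum : Summable (fun n : ℕ => C * (1/2:ℝ)^(n+1)) := by
    apply Summable.congr (f := fun n : ℕ => (C * (1/2)) * (1/2:ℝ)^n)
    · exact (summable_geometric_of_lt_one (by norm_num) (by norm_num)).mul_left _
    · intro n; ring
  have hle : ∀ n : ℕ, |c n * (1/2:ℝ)^(n+1)| ≤ C * (1/2:ℝ)^(n+1) := by
    intro n
    rw [abs_mul, abs_pow]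
    have h2 : |(1/2:ℝ)| = 1/2 := by norm_num
    rw [h2]
    exact mul_le_mul_of_nonneg_right (hC n) (by positivity)
  exact Summable.of_abs (Summable.of_nonneg_of_le (fun n => abs_nonneg _) hle hsum)

noncomputable def Taux (a : ℕ → ℝ) (k : ℕ) : ℝ :=
  ∑' n : ℕ, (a k - a (k+1+n)) * (1/2:ℝ)^(n+1)

lemma summable_T {a : ℕ → ℝ} {M : ℝ} (hM : ∀ n, |a n| ≤ M) (k : ℕ) :
    Summable (fun n => (a k - a (k+1+n)) * (1/2:ℝ)^(n+1)) := by
  apply summable_aux _ (2*M)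
  intro n
  calc |a k - a (k+1+n)| ≤ |a k| + |a (k+1+n)| := by
        rw [sub_eq_add_neg]; exact (abs_add_le _ _).trans (by rw [abs_neg])
    _ ≤ 2*M := by have := hM k; have := hM (k+1+n); linarith

lemma Ldiss_eq (α : ℝ) (a : ℕ → ℝ) (k : ℕ) :
    Ldiss α a k = (∑ n ∈ Finset.range k, (a k - a n) * (2:ℝ) ^ (2*α*(n:ℝ))) +
      (2:ℝ)^(2*α*(k:ℝ)) * Taux a k := by
  unfold Ldiss Taux
  congr 1
  rw [← tsum_mul_left]
  exact tsum_congr fun n => by rw [exp_eq]; ring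

lemma geom_half : ∑' n : ℕ, (1/2:ℝ)^(n+1) = 1 := by
  have h : ∑' n : ℕ, (1/2:ℝ)^n = 2 := by
    rw [tsum_geometric_of_lt_one (by norm_num) (by norm_num)]; norm_num
  calc ∑' n : ℕ, (1/2:ℝ)^(n+1) = ∑' n : ℕ, (1/2) * (1/2:ℝ)^n := by
        exact tsum_congr fun n => by ring
    _ = (1/2) * 2 := by rw [tsum_mul_left, h]
    _ = 1 := by norm_num

lemma geom_r (r : ℝ) (h0 : 0 ≤ r) (h1 : r < 1) : ∑' n : ℕ, r^(n+1) = r / (1 - r) := by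
  calc ∑' n : ℕ, r^(n+1) = ∑' n : ℕ, r * r^n := tsum_congr fun n => by ring
    _ = r * (1-r)⁻¹ := by rw [tsum_mul_left, tsum_geometric_of_lt_one h0 h1]
    _ = r / (1-r) := by rw [div_eq_mul_inv]

lemma summable_cgeom (c q : ℝ) (h0 : 0 ≤ q) (h1 : q < 1) :
    Summable (fun n : ℕ => c * q^(n+1)) := by
  apply Summable.congr (f := fun n : ℕ => (c * q) * q^n)
  · exact (summable_geometric_of_lt_one h0 h1).mul_left _
  · intro n; ring

lemma Trec {a : ℕ → ℝ} {M : ℝ} (hM : ∀ n, |a n| ≤ M) (k : ℕ) :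
    Taux a k = (1/2) * Taux a (k+1) - (a (k+1) - a k) := by
  have hsum0 : Summable (fun n => (a k - a (k+1+n)) * (1/2:ℝ)^(n+1)) := summable_T hM k
  have hs1 : Summable (fun n : ℕ => (1/2:ℝ) * ((a (k+1) - a ((k+1)+1+n)) * (1/2:ℝ)^(n+1))) :=
    (summable_T hM (k+1)).mul_left _
  have hs2 : Summable (fun n : ℕ => ((a k - a (k+1)) * (1/2)) * (1/2:ℝ)^(n+1)) :=
    summable_cgeom _ _ (by norm_num) (by norm_num)
  have hshift : ∀ n : ℕ,
      (a k - a (k+1+(n+1))) * (1/2:ℝ)^(n+1+1)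
      = (1/2:ℝ) * ((a (k+1) - a ((k+1)+1+n)) * (1/2:ℝ)^(n+1))
        + ((a k - a (k+1)) * (1/2)) * (1/2:ℝ)^(n+1) := by
    intro n
    have h1 : k+1+(n+1) = (k+1)+1+n := by omega
    rw [h1]; ring
  calc Taux a k
      = (a k - a (k+1+0)) * (1/2:ℝ)^(0+1)
        + ∑' n : ℕ, (a k - a (k+1+(n+1))) * (1/2:ℝ)^(n+1+1) := Summable.tsum_eq_zero_add hsum0
    _ = (a k - a (k+1)) * (1/2:ℝ)
        + ((1/2) * Taux a (k+1) + (a k - a (k+1)) * (1/2)) := by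
        congr 1
        · norm_num
        · rw [tsum_congr hshift, Summable.tsum_add hs1 hs2, tsum_mul_left, tsum_mul_left, geom_half]
          unfold Taux; ring
    _ = (1/2) * Taux a (k+1) - (a (k+1) - a k) := by ring

lemma alg1 (s d : ℝ) (hs2 : s^2 = 2) (hs1 : 1 < s) (hslt : s < 2) :
    (-(d * (s/2) / (1 - s/2))) * 1 + (d * (s/2) / (1 - s/2)) * ((s/2/2) / (1 - s/2/2)) = -(2/(2*s-1)) * d := by
  have e1 : (1:ℝ) - s/2 ≠ 0 := by intro h; nlinarith
  have e2 : (1:ℝ) - s/2/2 ≠ 0 := by intro h; nlinarith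
  have e3 : 2*s - 1 ≠ 0 := by intro h; nlinarith
  have e4 : (2:ℝ) - s ≠ 0 := by intro h; nlinarith
  have e5 : (8:ℝ) - s*6 + s^2 ≠ 0 := by intro h; nlinarith
  rw [show (s/2/2 : ℝ) = s/4 from by ring]
  have e6 : (1:ℝ) - s/4 ≠ 0 := by intro h; nlinarith
  have e7 : (4:ℝ) - s ≠ 0 := by intro h; nlinarith
  field_simp
  rw [neg_div', eq_div_iff (by intro h; nlinarith)]
  linear_combination d * (4*s - 8) * hs2

lemma Tbound {a : ℕ → ℝ} {M : ℝ} (hM : ∀ n, |a n| ≤ M) (j : ℕ) (hj : 2 ≤ j)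
    (hmono : ∀ n : ℕ, j < n →
      (a n - a (n-1)) * 2^n ≤ Real.sqrt 2 * ((a (n-1) - a (n-2)) * 2^(n-1))) :
    -(2/(2*Real.sqrt 2 - 1)) * (a j - a (j-1)) ≤ Taux a j := by
  set s := Real.sqrt 2 with hs_def
  have hs2 : s^2 = 2 := Real.sq_sqrt (by norm_num)
  have hs1 : 1 < s := by nlinarith [Real.sqrt_nonneg 2]
  have hslt : s < 2 := by nlinarith [Real.sqrt_nonneg 2]
  set r : ℝ := s/2 with hr_def
  have hr0 : 0 < r := by positivity
  have hr1 : r < 1 := by simp only [hr_def]; linarith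
  set d : ℝ := a j - a (j-1) with hd_def
  -- claim 1
  have claim1 : ∀ k : ℕ, a (j+1+k) - a (j+k) ≤ d * r^(k+1) := by
    intro k
    induction k with
    | zero =>
      have hm := hmono (j+1) (by omega)
      simp only [show j+1-1 = j from by omega, show j+1-2 = j-1 from by omega] at hm
      have hp : (0:ℝ) < 2^j := by positivity
      rw [pow_succ] at hm
      have : (a (j+1) - a j) * 2 ≤ s * (a j - a (j-1)) :=
        le_of_mul_le_mul_right (by nlinarith) hp
      simp only [hr_def, hd_def]
      have h10 : j + 1 + 0 = j + 1 := by omega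
      have h00 : j + 0 = j := by omega
      rw [h10, h00]
      nlinarith
    | succ k ih =>
      have hm := hmono (j+k+2) (by omega)
      simp only [show j+k+2-1 = j+k+1 from by omega, show j+k+2-2 = j+k from by omega] at hm
      have hp : (0:ℝ) < 2^(j+k+1) := by positivity
      rw [show j+k+2 = (j+k+1)+1 from by omega, pow_succ] at hm
      have hstep : (a (j+k+2) - a (j+k+1)) * 2 ≤ s * (a (j+k+1) - a (j+k)) :=
        le_of_mul_le_mul_right (by nlinarith) hp
      have ih' : a (j+k+1) - a (j+k) ≤ d * r^(k+1) := by
        rw [show j+1+k = j+k+1 from by omega] at ih; exact ih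
      have : a (j+k+2) - a (j+k+1) ≤ r * (d * r^(k+1)) := by
        have := mul_le_mul_of_nonneg_left ih' (le_of_lt hr0)
        simp only [hr_def] at *
        nlinarith
      rw [show j+1+(k+1) = j+k+2 from by omega, show j+(k+1) = j+k+1 from by omega]
      calc a (j+k+2) - a (j+k+1) ≤ r * (d * r^(k+1)) := this
        _ = d * r^(k+1+1) := by ring
  -- claim 2: telescoping bound
  have claim2 : ∀ n : ℕ, a (j+1+n) - a j ≤ d * r * (1 - r^(n+1)) / (1-r) := by
    intro n
    have htel : a (j+1+n) - a j = ∑ k ∈ Finset.range (n+1), (a (j+1+k) - a (j+k)) := by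
      have := Finset.sum_range_sub (fun k => a (j+k)) (n+1)
      rw [show ∑ k ∈ Finset.range (n+1), (a (j+1+k) - a (j+k))
          = ∑ k ∈ Finset.range (n+1), (a (j+(k+1)) - a (j+k)) from
        Finset.sum_congr rfl (fun k _ => by rw [show j+1+k = j+(k+1) from by omega]),
        this, show j+(n+1) = j+1+n from by omega, show j+0 = j from by omega]
    rw [htel]
    calc ∑ k ∈ Finset.range (n+1), (a (j+1+k) - a (j+k))
        ≤ ∑ k ∈ Finset.range (n+1), d * r^(k+1) :=
          Finset.sum_le_sum (fun k _ => claim1 k)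
      _ = d * r * ∑ k ∈ Finset.range (n+1), r^k := by
          rw [Finset.mul_sum]; exact Finset.sum_congr rfl (fun k _ => by ring)
      _ = d * r * ((r^(n+1) - 1)/(r - 1)) := by rw [geom_sum_eq (by linarith)]
      _ = d * r * (1 - r^(n+1)) / (1-r) := by
          rw [mul_div_assoc]; congr 1
          rw [div_eq_div_iff (by linarith) (by linarith)]; ring
  -- lower bound on the tsum
  set c : ℝ := d * r / (1-r) with hc_def
  have hlow : ∀ n : ℕ, (-c) * (1/2:ℝ)^(n+1) + c * (r/2)^(n+1)
      ≤ (a j - a (j+1+n)) * (1/2:ℝ)^(n+1) := by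
    intro n
    have hc : c * (1 - r^(n+1)) = d * r * (1 - r^(n+1)) / (1-r) := by
      rw [hc_def]; ring
    have h2 : -(c * (1 - r^(n+1))) ≤ a j - a (j+1+n) := by linarith [claim2 n]
    have hq : (0:ℝ) ≤ (1/2:ℝ)^(n+1) := by positivity
    have hmul := mul_le_mul_of_nonneg_right h2 hq
    have hpow : (r/2:ℝ)^(n+1) = r^(n+1) * (1/2:ℝ)^(n+1) := by
      rw [show (r/2:ℝ) = r * (1/2) from by ring, mul_pow]
    calc (-c) * (1/2:ℝ)^(n+1) + c * (r/2)^(n+1)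
        = (-(c * (1 - r^(n+1)))) * (1/2:ℝ)^(n+1) := by rw [hpow]; ring
      _ ≤ (a j - a (j+1+n)) * (1/2:ℝ)^(n+1) := hmul
  -- summability of lower bound
  have hsl1 : Summable (fun n : ℕ => (-c) * (1/2:ℝ)^(n+1)) :=
    summable_cgeom _ _ (by norm_num) (by norm_num)
  have hsl2 : Summable (fun n : ℕ => c * (r/2:ℝ)^(n+1)) :=
    summable_cgeom _ _ (by positivity) (by linarith)
  have hT : Summable (fun n => (a j - a (j+1+n)) * (1/2:ℝ)^(n+1)) := summable_T hM j
  have hle := Summable.tsum_le_tsum hlow (hsl1.add hsl2) hT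
  rw [Summable.tsum_add hsl1 hsl2, tsum_mul_left, tsum_mul_left, geom_half,
    geom_r (r/2) (by positivity) (by linarith)] at hle
  have hval : (-c) * 1 + c * ((r/2) / (1 - r/2)) = -(2/(2*s - 1)) * d := by
    rw [hc_def, hr_def]
    exact alg1 s d hs2 hs1 hslt
  rw [hval] at hle
  exact hle

lemma finpos (Cd CT d T u : ℝ) (hd : 0 < d) (hCT0 : 0 ≤ CT) (key : 0 < Cd - u*CT)
    (step : CT * (-u * d) ≤ CT * T) : 0 < Cd*d + CT*T := by
  nlinarith [mul_pos key hd]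

set_option maxHeartbeats 1000000 in
/-- Claim 2 of the dissipation comparison: if `b_j = √2 b_{j-1}` with `b_n > 0`, and
`b_n ≤ √2 b_{n-1}` for all `n > j`, then
`D_j = ((ℒa)_j − (ℒa)_{j-1}) − (1/√2)((ℒa)_{j-1} − (ℒa)_{j-2}) > 0`. -/
theorem stmt13 (α : ℝ) (hα0 : 0 < α) (hα1 : α < 1/2)
    (a : ℕ → ℝ) (hbdd : ∃ M : ℝ, ∀ n, |a n| ≤ M)
    (j : ℕ) (hj : 2 ≤ j)
    (hpos : ∀ n : ℕ, 1 ≤ n → 0 < (a n - a (n-1)) * 2^n)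
    (heq : (a j - a (j-1)) * 2^j = Real.sqrt 2 * ((a (j-1) - a (j-2)) * 2^(j-1)))
    (hmono : ∀ n : ℕ, j < n →
      (a n - a (n-1)) * 2^n ≤ Real.sqrt 2 * ((a (n-1) - a (n-2)) * 2^(n-1))) :
    0 < (Ldiss α a j - Ldiss α a (j-1))
        - (1 / Real.sqrt 2) * (Ldiss α a (j-1) - Ldiss α a (j-2)) := by
  obtain ⟨M, hM⟩ := hbdd
  set s := Real.sqrt 2 with hs_def
  have hs2 : s^2 = 2 := Real.sq_sqrt (by norm_num)
  have hs1 : 1 < s := by nlinarith [Real.sqrt_nonneg 2]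
  have hslt : s < 2 := by nlinarith [Real.sqrt_nonneg 2]
  set d : ℝ := a j - a (j-1) with hd_def
  -- positivity of d
  have hd : 0 < d := by
    have h := hpos j (by omega)
    have hp : (0:ℝ) < 2^j := by positivity
    nlinarith
  -- d_{j-1} = s * d
  have hd' : a (j-1) - a (j-2) = s * d := by
    have hp : (0:ℝ) < 2^(j-1) := by positivity
    rw [show j = (j-1)+1 from by omega, pow_succ] at heq
    simp only [show j-1+1-1 = j-1 from by omega, show j-1+1-2 = j-2 from by omega] at heq
    have h2d : 2 * d = s * (a (j-1) - a (j-2)) := by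
      apply mul_right_cancel₀ (ne_of_gt hp)
      simp only [hd_def]
      linear_combination heq
    have hs0 : (0:ℝ) < s := by linarith
    apply mul_left_cancel₀ (ne_of_gt hs0)
    rw [← mul_assoc]
    nlinarith [h2d]
  -- Taux recursions
  have hT1 : Taux a (j-1) = (1/2) * Taux a j - d := by
    have h := Trec hM (j-1)
    rw [show (j-1)+1 = j from by omega] at h
    rw [h, hd_def]
  have hT2 : Taux a (j-2) = (1/2) * Taux a (j-1) - s * d := by
    have h := Trec hM (j-2)
    rw [show (j-2)+1 = j-1 from by omega] at h
    rw [h, hd']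
  -- rpow bookkeeping
  set β : ℝ := (2:ℝ)^(2*α) with hβ_def
  set B : ℝ := (2:ℝ)^(2*α*((j:ℝ)-2)) with hB_def
  have hc1 : ((j-1 : ℕ):ℝ) = (j:ℝ) - 1 := by
    rw [Nat.cast_sub (by omega)]; norm_num
  have hc2 : ((j-2 : ℕ):ℝ) = (j:ℝ) - 2 := by
    rw [Nat.cast_sub (by omega)]; norm_num
  have hW2 : (2:ℝ)^(2*α*(((j-2:ℕ)):ℝ)) = B := by rw [hc2]
  have hW1 : (2:ℝ)^(2*α*(((j-1:ℕ)):ℝ)) = B * β := by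
    rw [hc1, hB_def, hβ_def, ← Real.rpow_add (by norm_num)]
    congr 1; ring
  have hW0 : (2:ℝ)^(2*α*((j:ℕ):ℝ)) = B * β * β := by
    rw [hB_def, hβ_def, ← Real.rpow_add (by norm_num), ← Real.rpow_add (by norm_num)]
    congr 1; ring
  have hB : 0 < B := Real.rpow_pos_of_pos (by norm_num) _
  have hβ1 : 1 < β := by
    rw [hβ_def]
    exact (Real.one_lt_rpow_iff_of_pos (by norm_num)).mpr (Or.inl ⟨by norm_num, by linarith⟩)
  have hβ2 : β < 2 := by
    rw [hβ_def]
    calc (2:ℝ)^(2*α) < 2^(1:ℝ) := by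
          apply Real.rpow_lt_rpow_of_exponent_lt (by norm_num)
          linarith
      _ = 2 := Real.rpow_one 2
  -- finite sum manipulations
  have e1 := Finset.sum_range_succ (fun n => (a j - a n) * (2:ℝ)^(2*α*(n:ℝ))) (j-1)
  rw [show j-1+1 = j from by omega] at e1
  have e2 := Finset.sum_range_succ (fun n => (a (j-1) - a n) * (2:ℝ)^(2*α*(n:ℝ))) (j-2)
  rw [show j-2+1 = j-1 from by omega] at e2
  have hF1 : (∑ n ∈ Finset.range j, (a j - a n) * (2:ℝ)^(2*α*(n:ℝ)))
      - (∑ n ∈ Finset.range (j-1), (a (j-1) - a n) * (2:ℝ)^(2*α*(n:ℝ)))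
      = d * ((∑ n ∈ Finset.range (j-1), (2:ℝ)^(2*α*(n:ℝ)))) + d * (B*β) := by
    rw [e1]
    have e3 : ∀ n ∈ Finset.range (j-1),
        (a j - a n) * (2:ℝ)^(2*α*(n:ℝ)) - (a (j-1) - a n) * (2:ℝ)^(2*α*(n:ℝ))
        = d * (2:ℝ)^(2*α*(n:ℝ)) := by
      intro n _; rw [hd_def]; ring
    have e4 : (∑ n ∈ Finset.range (j-1), (a j - a n) * (2:ℝ)^(2*α*(n:ℝ)))
        - (∑ n ∈ Finset.range (j-1), (a (j-1) - a n) * (2:ℝ)^(2*α*(n:ℝ)))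
        = d * ∑ n ∈ Finset.range (j-1), (2:ℝ)^(2*α*(n:ℝ)) := by
      rw [← Finset.sum_sub_distrib, Finset.mul_sum]
      exact Finset.sum_congr rfl e3
    rw [hW1, hd_def]
    linear_combination e4
  have eG := Finset.sum_range_succ (fun n => (2:ℝ)^(2*α*(n:ℝ))) (j-2)
  rw [show j-2+1 = j-1 from by omega] at eG
  have hF2 : (∑ n ∈ Finset.range (j-1), (a (j-1) - a n) * (2:ℝ)^(2*α*(n:ℝ)))
      - (∑ n ∈ Finset.range (j-2), (a (j-2) - a n) * (2:ℝ)^(2*α*(n:ℝ)))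
      = (s*d) * ((∑ n ∈ Finset.range (j-1), (2:ℝ)^(2*α*(n:ℝ)))) := by
    rw [e2]
    have e5 : (∑ n ∈ Finset.range (j-2), (a (j-1) - a n) * (2:ℝ)^(2*α*(n:ℝ)))
        - (∑ n ∈ Finset.range (j-2), (a (j-2) - a n) * (2:ℝ)^(2*α*(n:ℝ)))
        = (s*d) * ∑ n ∈ Finset.range (j-2), (2:ℝ)^(2*α*(n:ℝ)) := by
      rw [← Finset.sum_sub_distrib, Finset.mul_sum]
      refine Finset.sum_congr rfl (fun n _ => ?_)
      linear_combination (2:ℝ)^(2*α*(n:ℝ)) * hd'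
    rw [eG]
    linear_combination e5 + (2:ℝ)^(2*α*((j-2:ℕ):ℝ)) * hd'
  -- bound on Taux a j
  have hTlow : -(2/(2*s - 1)) * d ≤ Taux a j := by
    rw [hd_def, hs_def]
    exact Tbound hM j hj hmono
  -- abbreviations
  set G1 : ℝ := ∑ n ∈ Finset.range (j-1), (2:ℝ)^(2*α*(n:ℝ)) with hG1_def
  set T : ℝ := Taux a j with hT_def
  set Cd : ℝ := 2*β - 1 + (s/2)*(β - 1/2) with hCd_def
  set CT : ℝ := (β - 1/2)*(β - s/4) with hCT_def
  have hinv : (1:ℝ)/s = s/2 := by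
    rw [div_eq_div_iff (by linarith) (by norm_num)]
    linear_combination -hs2
  have hDval : (Ldiss α a j - Ldiss α a (j-1))
      - (1 / s) * (Ldiss α a (j-1) - Ldiss α a (j-2))
      = B * (Cd * d + CT * T) := by
    rw [Ldiss_eq, Ldiss_eq, Ldiss_eq, hW0, hW1, hW2, hinv, hT2, hT1]
    rw [hCd_def, hCT_def]
    linear_combination hF1 - (s/2) * hF2 + (-(d * G1 + B*d)/2) * hs2
  rw [hDval]
  -- positivity
  have h2s1 : (0:ℝ) < 2*s - 1 := by linarith
  have hCT0 : 0 ≤ CT := by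
    rw [hCT_def]
    nlinarith
  have hf : 0 < (2*s-1)*Cd - 2*CT := by
    rw [hCd_def, hCT_def]
    nlinarith [mul_pos (by linarith : (0:ℝ) < β - 1) (by linarith : (0:ℝ) < 2 - β)]
  have key : 0 < Cd - (2/(2*s-1))*CT := by
    have heq2 : Cd - (2/(2*s-1))*CT = ((2*s-1)*Cd - 2*CT)/(2*s-1) := by
      field_simp
    rw [heq2]
    exact div_pos hf h2s1
  have step1 : CT * (-(2/(2*s-1)) * d) ≤ CT * T :=
    mul_le_mul_of_nonneg_left hTlow hCT0
  have final : 0 < Cd * d + CT * T :=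
    finpos Cd CT d T (2/(2*s-1)) hd hCT0 key step1
  exact mul_pos hB final
end

section
/- Let 0 < α < 1/2 and let a = (a_k) be nondecreasing and bounded with limit a_∞, lying in X^s for s > 1. Then for every k ≥ 1, (ℒ^α a)_∞ − (ℒ^α a)_k ≤ C(α) (a_∞ − a_k) 2^{2αk} + Σ_{n=k}^∞ (a_∞ − a_n) 2^{2αn}, where (ℒ^α a)_∞ = Σ_{n=0}^∞ (a_∞ − a_n) 2^{2αn} and C(α) depends only on α. In particular, if additionally a_∞ − a_n ≤ C₁ 2^{−n/2} for all n (Hölder-1/2 bound) and 2α < 1/2, then (ℒ^α a)_∞ − (ℒ^α a)_k ≤ C(α)(a_∞ − a_k) 2^{2αk} + C' 2^{(2α − 1/2)k}. -/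
private lemma rpow_nat_aux (β : ℝ) (n : ℕ) : (2:ℝ) ^ (β * (n:ℝ)) = ((2:ℝ) ^ β) ^ n := by
  rw [← Real.rpow_natCast ((2:ℝ) ^ β) n, ← Real.rpow_mul (by norm_num)]

private lemma half_rpow_aux (n : ℕ) :
    (2:ℝ) ^ (-(1:ℝ) - (n:ℝ)) = (1/2) * (1/2:ℝ) ^ n := by
  rw [show -(1:ℝ) - (n:ℝ) = -(((n+1:ℕ):ℝ)) by push_cast; ring,
      Real.rpow_neg (by norm_num), Real.rpow_natCast]
  rw [pow_succ, mul_inv]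
  simp [one_div, inv_pow]
  ring

/-- Estimate for `(ℒa)_∞ − (ℒa)_k`, where `(ℒa)_∞ = Σ (a_∞ − a_n)2^{2αn}`. -/
theorem stmt14 (α : ℝ) (hα0 : 0 < α) (hα1 : α < 1/2) :
    ∃ Cα : ℝ, 0 < Cα ∧
      ∀ (a : ℕ → ℝ) (aInf : ℝ), Monotone a →
        Filter.Tendsto a Filter.atTop (nhds aInf) →
        (∃ s : ℝ, 1 < s ∧ ∃ C₂ : ℝ, ∀ k : ℕ,
          |a (k+1) - a k| * (2:ℝ) ^ (s * ((k:ℝ)+1)) ≤ C₂) →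
        Summable (fun n : ℕ => (aInf - a n) * (2:ℝ) ^ (2 * α * (n:ℝ))) →
        (∀ k : ℕ, 1 ≤ k →
          (∑' n : ℕ, (aInf - a n) * (2:ℝ) ^ (2 * α * (n:ℝ))) - Ldiss α a k
            ≤ Cα * (aInf - a k) * (2:ℝ) ^ (2 * α * (k:ℝ))
              + ∑' n : ℕ, (aInf - a (k + n)) * (2:ℝ) ^ (2 * α * ((k:ℝ) + (n:ℝ)))) ∧
        (∀ C₁ : ℝ, 0 ≤ C₁ →
          (∀ n : ℕ, aInf - a n ≤ C₁ * (2:ℝ) ^ (-(n:ℝ)/2)) → α < 1/4 →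
          ∃ C' : ℝ, 0 < C' ∧ ∀ k : ℕ, 1 ≤ k →
            (∑' n : ℕ, (aInf - a n) * (2:ℝ) ^ (2 * α * (n:ℝ))) - Ldiss α a k
              ≤ Cα * (aInf - a k) * (2:ℝ) ^ (2 * α * (k:ℝ))
                + C' * (2:ℝ) ^ ((2 * α - 1/2) * (k:ℝ))) := by
  set r : ℝ := (2:ℝ) ^ (2 * α) with hr_def
  have hr1 : 1 < r := by
    have := (Real.rpow_lt_rpow_left_iff (show (1:ℝ) < 2 by norm_num)).2
      (show (0:ℝ) < 2 * α by linarith)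
    simpa [hr_def] using this
  have hrpos : (0:ℝ) < r := lt_trans one_pos hr1
  have hinv : (0:ℝ) < (r - 1)⁻¹ := inv_pos.2 (by linarith)
  refine ⟨1 + (r - 1)⁻¹, by linarith, ?_⟩
  intro a aInf hmono hlim _hXs hsum
  have hle : ∀ m, a m ≤ aInf := fun m => hmono.ge_of_tendsto hlim m
  -- tail summability
  have hsum_tail : ∀ k : ℕ,
      Summable (fun n : ℕ => (aInf - a (k + n)) * (2:ℝ) ^ (2 * α * ((k:ℝ) + (n:ℝ)))) := by
    intro k
    have h1 := (summable_nat_add_iff (f := fun n : ℕ =>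
      (aInf - a n) * (2:ℝ) ^ (2 * α * (n:ℝ))) k).2 hsum
    refine h1.congr fun n => ?_
    rw [add_comm n k]
    push_cast
    ring_nf
  -- the key estimate, valid for all k
  have key : ∀ k : ℕ,
      (∑' n : ℕ, (aInf - a n) * (2:ℝ) ^ (2 * α * (n:ℝ))) - Ldiss α a k
        ≤ (1 + (r - 1)⁻¹) * (aInf - a k) * (2:ℝ) ^ (2 * α * (k:ℝ))
          + ∑' n : ℕ, (aInf - a (k + n)) * (2:ℝ) ^ (2 * α * ((k:ℝ) + (n:ℝ))) := by
    intro k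
    have hd : 0 ≤ aInf - a k := sub_nonneg.2 (hle k)
    -- split the full sum
    have hS := (Summable.sum_add_tsum_nat_add (f := fun n : ℕ =>
      (aInf - a n) * (2:ℝ) ^ (2 * α * (n:ℝ))) k hsum).symm
    have hTeq : (∑' n : ℕ, (aInf - a (n + k)) * (2:ℝ) ^ (2 * α * ((n + k : ℕ):ℝ)))
        = ∑' n : ℕ, (aInf - a (k + n)) * (2:ℝ) ^ (2 * α * ((k:ℝ) + (n:ℝ))) := by
      refine tsum_congr fun n => ?_
      rw [add_comm n k]; push_cast; ring_nf
    -- rewrite the Ldiss tail as a negative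
    have hL : Ldiss α a k
        = (∑ n ∈ Finset.range k, (a k - a n) * (2:ℝ) ^ (2 * α * (n:ℝ)))
          - ∑' n : ℕ, (a (k + 1 + n) - a k) * (2:ℝ) ^ (2 * α * (k:ℝ)) * ((1/2) * (1/2:ℝ) ^ n) := by
      unfold Ldiss
      have h := tsum_congr (L := SummationFilter.unconditional ℕ) (f := fun n : ℕ =>
          (a k - a (k + 1 + n)) * (2:ℝ) ^ (2 * α * (k:ℝ)) * (2:ℝ) ^ (-(1:ℝ) - (n:ℝ)))
        (g := fun n : ℕ =>
          -((a (k + 1 + n) - a k) * (2:ℝ) ^ (2 * α * (k:ℝ)) * ((1/2) * (1/2:ℝ) ^ n)))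
        (fun n => by simp only [half_rpow_aux]; ring)
      rw [h, tsum_neg]; ring
    -- the first finite sum difference
    have e1 : (∑ n ∈ Finset.range k, (aInf - a n) * (2:ℝ) ^ (2 * α * (n:ℝ)))
        - (∑ n ∈ Finset.range k, (a k - a n) * (2:ℝ) ^ (2 * α * (n:ℝ)))
        = ∑ n ∈ Finset.range k, (aInf - a k) * (2:ℝ) ^ (2 * α * (n:ℝ)) := by
      rw [← Finset.sum_sub_distrib]
      exact Finset.sum_congr rfl fun n _ => by ring
    -- bound for the finite geometric sum
    have bound1 : (∑ n ∈ Finset.range k, (aInf - a k) * (2:ℝ) ^ (2 * α * (n:ℝ)))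
        ≤ (r - 1)⁻¹ * (aInf - a k) * (2:ℝ) ^ (2 * α * (k:ℝ)) := by
      have : ∀ n ∈ Finset.range k, (aInf - a k) * (2:ℝ) ^ (2 * α * (n:ℝ))
          = (aInf - a k) * r ^ n := fun n _ => by rw [rpow_nat_aux]
      rw [Finset.sum_congr rfl this, ← Finset.mul_sum, geom_sum_eq (ne_of_gt hr1),
        rpow_nat_aux, div_eq_mul_inv]
      have hrk : (0:ℝ) < r ^ k := pow_pos hrpos k
      nlinarith [mul_nonneg hd hinv.le]
    -- bound for the tail of Ldiss
    have hterm_le : ∀ n : ℕ,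
        (a (k + 1 + n) - a k) * (2:ℝ) ^ (2 * α * (k:ℝ)) * ((1/2) * (1/2:ℝ) ^ n)
          ≤ (aInf - a k) * (2:ℝ) ^ (2 * α * (k:ℝ)) * ((1/2) * (1/2:ℝ) ^ n) := by
      intro n
      have h2 : a (k + 1 + n) ≤ aInf := hle _
      have hp : (0:ℝ) ≤ (2:ℝ) ^ (2 * α * (k:ℝ)) * ((1/2) * (1/2:ℝ) ^ n) := by positivity
      have := mul_le_mul_of_nonneg_right (show a (k+1+n) - a k ≤ aInf - a k by linarith) hp
      calc (a (k + 1 + n) - a k) * (2:ℝ) ^ (2 * α * (k:ℝ)) * ((1/2) * (1/2:ℝ) ^ n)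
          = (a (k + 1 + n) - a k) * ((2:ℝ) ^ (2 * α * (k:ℝ)) * ((1/2) * (1/2:ℝ) ^ n)) := by ring
        _ ≤ (aInf - a k) * ((2:ℝ) ^ (2 * α * (k:ℝ)) * ((1/2) * (1/2:ℝ) ^ n)) := this
        _ = (aInf - a k) * (2:ℝ) ^ (2 * α * (k:ℝ)) * ((1/2) * (1/2:ℝ) ^ n) := by ring
    have hterm_nonneg : ∀ n : ℕ,
        0 ≤ (a (k + 1 + n) - a k) * (2:ℝ) ^ (2 * α * (k:ℝ)) * ((1/2) * (1/2:ℝ) ^ n) := by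
      intro n
      have h2 : a k ≤ a (k + 1 + n) := hmono (by omega)
      have h3 : (0:ℝ) ≤ a (k + 1 + n) - a k := by linarith
      positivity
    have hg_sum : Summable (fun n : ℕ =>
        (aInf - a k) * (2:ℝ) ^ (2 * α * (k:ℝ)) * ((1/2) * (1/2:ℝ) ^ n)) := by
      refine (((summable_geometric_of_lt_one (by norm_num) (by norm_num : (1/2:ℝ) < 1)).mul_left
        ((aInf - a k) * (2:ℝ) ^ (2 * α * (k:ℝ)) * (1/2)))).congr fun n => by ring
    have hT3_sum : Summable (fun n : ℕ =>
        (a (k + 1 + n) - a k) * (2:ℝ) ^ (2 * α * (k:ℝ)) * ((1/2) * (1/2:ℝ) ^ n)) :=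
      Summable.of_nonneg_of_le hterm_nonneg hterm_le hg_sum
    have bound3 : (∑' n : ℕ, (a (k + 1 + n) - a k) * (2:ℝ) ^ (2 * α * (k:ℝ)) * ((1/2) * (1/2:ℝ) ^ n))
        ≤ (aInf - a k) * (2:ℝ) ^ (2 * α * (k:ℝ)) := by
      calc (∑' n : ℕ, (a (k + 1 + n) - a k) * (2:ℝ) ^ (2 * α * (k:ℝ)) * ((1/2) * (1/2:ℝ) ^ n))
          ≤ ∑' n : ℕ, (aInf - a k) * (2:ℝ) ^ (2 * α * (k:ℝ)) * ((1/2) * (1/2:ℝ) ^ n) :=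
            Summable.tsum_le_tsum hterm_le hT3_sum hg_sum
        _ = ∑' n : ℕ, ((aInf - a k) * (2:ℝ) ^ (2 * α * (k:ℝ)) * (1/2)) * (1/2:ℝ) ^ n :=
            tsum_congr fun n => by ring
        _ = ((aInf - a k) * (2:ℝ) ^ (2 * α * (k:ℝ)) * (1/2)) * ∑' n : ℕ, (1/2:ℝ) ^ n :=
            tsum_mul_left
        _ = (aInf - a k) * (2:ℝ) ^ (2 * α * (k:ℝ)) := by
            rw [tsum_geometric_of_lt_one (by norm_num) (by norm_num : (1/2:ℝ) < 1)]
            norm_num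
            ring
    -- put everything together
    linarith [hS, hTeq, hL, e1, bound1, bound3]
  constructor
  · intro k _
    exact key k
  · intro C₁ hC₁ hHolder hα4
    set q : ℝ := (2:ℝ) ^ (2 * α - 1/2) with hq_def
    have hq0 : (0:ℝ) < q := Real.rpow_pos_of_pos (by norm_num) _
    have hq1 : q < 1 :=
      Real.rpow_lt_one_of_one_lt_of_neg (by norm_num) (by linarith)
    have h1q : (0:ℝ) < 1 - q := by linarith
    refine ⟨(C₁ + 1) / (1 - q), by positivity, ?_⟩
    intro k hk
    have hT2 : (∑' n : ℕ, (aInf - a (k + n)) * (2:ℝ) ^ (2 * α * ((k:ℝ) + (n:ℝ))))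
        ≤ (C₁ + 1) / (1 - q) * (2:ℝ) ^ ((2 * α - 1/2) * (k:ℝ)) := by
      have hterm : ∀ n : ℕ, (aInf - a (k + n)) * (2:ℝ) ^ (2 * α * ((k:ℝ) + (n:ℝ)))
          ≤ (C₁ * q ^ k) * q ^ n := by
        intro n
        have h0 := hHolder (k + n)
        have hp : (0:ℝ) ≤ (2:ℝ) ^ (2 * α * ((k:ℝ) + (n:ℝ))) := by positivity
        have h1 := mul_le_mul_of_nonneg_right h0 hp
        have h2 : C₁ * (2:ℝ) ^ (-((k + n : ℕ):ℝ)/2) * (2:ℝ) ^ (2 * α * ((k:ℝ) + (n:ℝ)))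
            = (C₁ * q ^ k) * q ^ n := by
          rw [mul_assoc, ← Real.rpow_add (by norm_num : (0:ℝ) < 2)]
          rw [show -((k + n : ℕ):ℝ)/2 + 2 * α * ((k:ℝ) + (n:ℝ))
              = (2 * α - 1/2) * (((k + n : ℕ):ℕ):ℝ) by push_cast; ring]
          rw [rpow_nat_aux, ← hq_def, pow_add]
          ring
        calc (aInf - a (k + n)) * (2:ℝ) ^ (2 * α * ((k:ℝ) + (n:ℝ)))
            ≤ C₁ * (2:ℝ) ^ (-((k + n : ℕ):ℝ)/2) * (2:ℝ) ^ (2 * α * ((k:ℝ) + (n:ℝ))) := h1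
          _ = (C₁ * q ^ k) * q ^ n := h2
      have hgsum : Summable (fun n : ℕ => (C₁ * q ^ k) * q ^ n) :=
        (summable_geometric_of_lt_one hq0.le hq1).mul_left _
      calc (∑' n : ℕ, (aInf - a (k + n)) * (2:ℝ) ^ (2 * α * ((k:ℝ) + (n:ℝ))))
          ≤ ∑' n : ℕ, (C₁ * q ^ k) * q ^ n := Summable.tsum_le_tsum hterm (hsum_tail k) hgsum
        _ = (C₁ * q ^ k) * (1 - q)⁻¹ := by
            rw [tsum_mul_left, tsum_geometric_of_lt_one hq0.le hq1]
        _ ≤ (C₁ + 1) / (1 - q) * (2:ℝ) ^ ((2 * α - 1/2) * (k:ℝ)) := by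
            rw [rpow_nat_aux, ← hq_def]
            have hqk : (0:ℝ) < q ^ k := pow_pos hq0 k
            rw [div_eq_mul_inv]
            nlinarith [mul_pos hqk (inv_pos.2 h1q)]
    have := key k
    linarith [hT2]
end
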